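/- Let D be a division ring. Then for each integer n ≥ 2, the matrix ring M_n(D) of n × n matrices over D is twin-good. -/

import Mathlib

open Matrix Function Module LinearMap
open Fin.CommRing

section TwinGoodAux
variable {D : Type*} [DivisionRing D] {n : ℕ}


/-- The matrix of a linear map, for the `vecMul` (right action) convention. -/
noncomputable def toMat (g : (Fin n → D) →ₗ[D] (Fin n → D)) : Matrix (Fin n) (Fin n) D :=
  Matrix.of fun i j => g (Pi.single i 1) j

lemma vecMul_toMat (g : (Fin n → D) →ₗ[D] (Fin n → D)) (v : Fin n → D) :
    v ᵥ* (toMat g) = g v := by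
  have hv : v = ∑ i, v i • (Pi.single i (1:D) : Fin n → D) := by
    ext j
    simp [Pi.single_apply, Finset.sum_apply]
  ext j
  rw [show g v = g (∑ i, v i • (Pi.single i (1:D) : Fin n → D)) by rw [← hv]]
  simp [toMat, vecMul, dotProduct, Finset.sum_apply]

lemma isUnit_iff_inj (A : Matrix (Fin n) (Fin n) D) :
    IsUnit A ↔ Injective A.vecMulLinear := by
  constructor
  · rintro ⟨u, rfl⟩
    have key : Function.LeftInverse u.inv.vecMulLinear u.val.vecMulLinear := fun x => by
      simp only [Matrix.vecMulLinear_apply, vecMul_vecMul, u.val_inv, vecMul_one]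
    exact key.injective
  · intro h
    have hsurj : Surjective A.vecMulLinear := LinearMap.injective_iff_surjective.mp h
    let e := LinearEquiv.ofBijective A.vecMulLinear ⟨h, hsurj⟩
    let B : Matrix (Fin n) (Fin n) D := toMat (e.symm : (Fin n → D) →ₗ[D] (Fin n → D))
    have he : ∀ x, x ᵥ* A = e x := fun _ => rfl
    have h1 : A * B = 1 := by
      ext i j
      have h0 : (Pi.single i (1:D) : Fin n → D) ᵥ* (A * B)
          = (Pi.single i (1:D) : Fin n → D) ᵥ* (1 : Matrix (Fin n) (Fin n) D) := by
        rw [← vecMul_vecMul, vecMul_toMat, he]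
        simp [LinearEquiv.symm_apply_apply, vecMul_one]
      simpa [Matrix.single_one_vecMul, Matrix.one_apply, Pi.single_apply, eq_comm]
        using congr_fun h0 j
    have h2 : B * A = 1 := by
      ext i j
      have h0 : (Pi.single i (1:D) : Fin n → D) ᵥ* (B * A)
          = (Pi.single i (1:D) : Fin n → D) ᵥ* (1 : Matrix (Fin n) (Fin n) D) := by
        rw [← vecMul_vecMul, vecMul_toMat, he]
        simp [LinearEquiv.apply_symm_apply, vecMul_one]
      simpa [Matrix.single_one_vecMul, Matrix.one_apply, Pi.single_apply, eq_comm]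
        using congr_fun h0 j
    exact ⟨⟨A, B, h1, h2⟩, rfl⟩


/-- Companion-type matrix of `Xⁿ - X - 1` (row-vector convention). -/
def Gm (n : ℕ) (D : Type*) [DivisionRing D] [NeZero n] : Matrix (Fin n) (Fin n) D :=
  Matrix.of fun i j => (if j = i + 1 then 1 else 0) + (if i + 1 = 0 ∧ j = 1 then 1 else 0)

lemma vecMul_Gm [NeZero n] (a : D) (x : Fin n → D) (j : Fin n) :
    (x ᵥ* (a • (1 : Matrix (Fin n) (Fin n) D) + Gm n D)) j
      = x j * a + x (j - 1) + (if j = 1 then x (0 - 1) else 0) := by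
  have h1 : ∀ i : Fin n, (j = i + 1) = (i = j - 1) := fun i =>
    propext (by rw [eq_sub_iff_add_eq, eq_comm])
  have h2 : ∀ i : Fin n, (i + 1 = 0) = (i = 0 - 1) := fun i =>
    propext (by rw [eq_sub_iff_add_eq])
  simp only [vecMul, dotProduct, Matrix.add_apply, Matrix.smul_apply, Matrix.one_apply, Gm,
    Matrix.of_apply, smul_eq_mul, h1, h2, mul_add, mul_ite, mul_one, mul_zero,
    Finset.sum_add_distrib, ite_and]
  rw [Finset.sum_ite_eq' Finset.univ j (fun i => x i * a),
    Finset.sum_ite_eq' Finset.univ (j - 1 : Fin n) (fun i => x i),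
    Finset.sum_ite_eq' Finset.univ ((0 : Fin n) - 1) (fun i => if j = 1 then x i else 0)]
  simp only [Finset.mem_univ, if_true, add_assoc]

lemma key_inj [NeZero n] (hn : 2 ≤ n) (a : D) (ha : a = 0 ∨ a = 1 ∨ a = -1) :
    ∀ x : Fin n → D, x ᵥ* (a • (1 : Matrix (Fin n) (Fin n) D) + Gm n D) = 0 → x = 0 := by
  intro x hx
  have eq0 : ∀ j : Fin n, x j * a + x (j - 1) + (if j = 1 then x (0 - 1) else 0) = 0 :=
    fun j => by rw [← vecMul_Gm, hx]; rfl
  -- basic cast facts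
  have hcast : ∀ m : ℕ, 1 ≤ m → ((m : Fin n) - 1 : Fin n) = ((m - 1 : ℕ) : Fin n) := by
    intro m hm
    rw [sub_eq_iff_eq_add]
    have : ((m - 1 : ℕ) : Fin n) + 1 = ((m - 1 + 1 : ℕ) : Fin n) := by push_cast; ring
    rw [this]
    congr 1
    omega
  have hval : ∀ m : ℕ, m < n → ((m : Fin n)).val = m := fun m hm => by
    rw [Fin.val_natCast]; exact Nat.mod_eq_of_lt hm
  have hone : (1 : Fin n) = ((1 : ℕ) : Fin n) := by push_cast; ring
  have hω : ((0 : Fin n) - 1 : Fin n) = ((n - 1 : ℕ) : Fin n) := by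
    rw [sub_eq_iff_eq_add]
    have : ((n - 1 : ℕ) : Fin n) + 1 = ((n - 1 + 1 : ℕ) : Fin n) := by push_cast; ring
    rw [this, show n - 1 + 1 = n by omega, Fin.natCast_self]
  -- the recursive relation away from column 1
  have h2 : ∀ j : Fin n, j ≠ 1 → x (j - 1) = -(x j * a) := by
    intro j hj
    have := eq0 j
    rw [if_neg hj] at this
    linear_combination (norm := noncomm_ring) this
  -- the chain
  have chain : ∀ s : ℕ, s ≤ n - 2 → x ((n - 1 - s : ℕ) : Fin n)
      = x ((n - 1 : ℕ) : Fin n) * (-a) ^ s := by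
    intro s hs
    induction s with
    | zero => simp
    | succ s ih =>
      have hs' : s ≤ n - 2 := by omega
      have ihs := ih hs'
      have hne : ((n - 1 - s : ℕ) : Fin n) ≠ 1 := by
        rw [hone]
        intro h
        rw [Fin.ext_iff, hval _ (by omega), hval 1 (by omega)] at h
        omega
      have := h2 _ hne
      rw [hcast _ (by omega), show n - 1 - s - 1 = n - 1 - (s + 1) by omega, ihs] at this
      rw [this, pow_succ, mul_neg, mul_neg, mul_assoc]
  -- relations at j = 0 and j = 1
  have hzero_ne_one : (0 : Fin n) ≠ 1 := by
    rw [hone]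
    intro h
    rw [Fin.ext_iff, hval 1 (by omega)] at h
    simp at h
  have hX : x ((n - 1 : ℕ) : Fin n) = -(x 0 * a) := by
    have := h2 0 hzero_ne_one
    rwa [hω] at this
  have hx1 : x (1 : Fin n) = x ((n - 1 : ℕ) : Fin n) * (-a) ^ (n - 2) := by
    have := chain (n - 2) le_rfl
    rw [show n - 1 - (n - 2) = 1 by omega] at this
    rwa [← hone] at this
  have hq1 : x 0 = -(x 1 * a) - x ((n - 1 : ℕ) : Fin n) := by
    have := eq0 1
    rw [if_pos rfl, sub_self, hω] at this
    linear_combination (norm := noncomm_ring) this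
  -- deduce x (n-1) = 0
  set X := x ((n - 1 : ℕ) : Fin n) with hXdef
  have hXX : X * (1 - (-a) ^ (n - 2) * a * a - a) = 0 := by
    have e1 : X = -(((-(x 1 * a)) - X) * a) := by rw [← hq1, ← hX]
    have e2 : X = (X * (-a) ^ (n - 2)) * a * a + X * a := by
      calc X = -(((-(x (1 : Fin n) * a)) - X) * a) := e1
      _ = (x (1 : Fin n) * a) * a + X * a := by noncomm_ring
      _ = (X * (-a) ^ (n - 2)) * a * a + X * a := by rw [hx1]
    calc X * (1 - (-a) ^ (n - 2) * a * a - a)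
        = X - ((X * (-a) ^ (n - 2)) * a * a + X * a) := by noncomm_ring
      _ = 0 := by rw [← e2, sub_self]
  have hs0 : (1 - (-a) ^ (n - 2) * a * a - a : D) ≠ 0 := by
    rcases ha with rfl | rfl | rfl
    · simp
    · rcases Nat.even_or_odd (n - 2) with he | ho
      · rw [he.neg_one_pow]; simp
      · rw [ho.neg_one_pow]; simp
    · simp
  have hX0 : X = 0 := by
    rcases mul_eq_zero.mp hXX with h | h
    · exact h
    · exact absurd h hs0
  -- all coordinates vanish
  funext j
  show x j = 0
  rcases Nat.eq_zero_or_pos j.val with hv | hv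
  · have hj0 : j = 0 := by rw [Fin.ext_iff, hv]; simp
    rw [hj0, hq1, hx1, hX0]
    simp
  · have hs : n - 1 - (n - 1 - j.val) = j.val := by omega
    have := chain (n - 1 - j.val) (by omega)
    rw [hs, hX0, zero_mul] at this
    rwa [Fin.cast_val_eq_self] at this


lemma noninv_case (hn : 1 ≤ n) (f : (Fin n → D) →ₗ[D] (Fin n → D)) (hf : ¬ Injective f) :
    ∃ u : (Fin n → D) ≃ₗ[D] (Fin n → D),
      Injective (f + u.toLinearMap) ∧ Injective (f - u.toLinearMap) := by
  classical
  haveI : NeZero n := ⟨by omega⟩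
  obtain ⟨C, hC⟩ := Submodule.exists_isCompl (LinearMap.ker f)
  obtain ⟨C₂, hC₂⟩ := Submodule.exists_isCompl (LinearMap.range f)
  set k := finrank D (LinearMap.ker f) with hkdef
  set r := finrank D C with hrdef
  have hfinV : finrank D (Fin n → D) = n := Module.finrank_fin_fun D
  have hkr : k + r = n := by
    have := Submodule.finrank_add_eq_of_isCompl hC
    rw [hfinV] at this
    exact this
  set φ := f ∘ₗ C.subtype with hφdef
  have hφinj : Injective φ := by
    rw [← LinearMap.ker_eq_bot, LinearMap.ker_eq_bot']
    rintro ⟨c, hc⟩ h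
    have hck : c ∈ LinearMap.ker f := by
      simpa [φ, LinearMap.mem_ker] using h
    have : c ∈ LinearMap.ker f ⊓ C := ⟨hck, hc⟩
    rw [hC.inf_eq_bot] at this
    exact Subtype.ext (by simpa using this)
  have hφrange : LinearMap.range φ = LinearMap.range f := by
    apply le_antisymm
    · rintro y ⟨c, rfl⟩
      exact ⟨c, rfl⟩
    · rintro y ⟨v, rfl⟩
      have hv : v ∈ (LinearMap.ker f) ⊔ C := by rw [hC.sup_eq_top]; trivial
      obtain ⟨a, ha, b, hb, rfl⟩ := Submodule.mem_sup.mp hv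
      refine ⟨⟨b, hb⟩, ?_⟩
      simp [φ, map_add, LinearMap.mem_ker.mp ha]
  have hrC2 : finrank D C₂ = k := by
    have h1 : finrank D ↥(LinearMap.range f) + finrank D ↥C₂ = n := by
      have := Submodule.finrank_add_eq_of_isCompl hC₂
      rw [hfinV] at this
      exact this
    have h2 : finrank D ↥(LinearMap.range f) = r :=
      (LinearEquiv.finrank_eq
        ((LinearEquiv.ofInjective φ hφinj).trans (LinearEquiv.ofEq _ _ hφrange))).symm
    omega
  -- bases
  let bK : Basis (Fin k) D (LinearMap.ker f) := Module.finBasis D _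
  let bC : Basis (Fin r) D C := Module.finBasis D _
  let bC2 : Basis (Fin k) D C₂ := (Module.finBasis D C₂).reindex (finCongr hrC2)
  let eφ : C ≃ₗ[D] LinearMap.range f :=
    (LinearEquiv.ofInjective φ hφinj).trans (LinearEquiv.ofEq _ _ hφrange)
  let v : Basis (Fin k ⊕ Fin r) D (Fin n → D) :=
    (bK.prod bC).map (Submodule.prodEquivOfIsCompl _ _ hC)
  let bR : Basis (Fin r) D (LinearMap.range f) := bC.map eφ
  let w : Basis (Fin k ⊕ Fin r) D (Fin n → D) :=
    (bC2.prod bR).map (Submodule.prodEquivOfIsCompl _ _ hC₂.symm)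
  have hvinl : ∀ a : Fin k, f (v (Sum.inl a)) = 0 := by
    intro a
    have hmem : ((bK a : (Fin n → D))) ∈ LinearMap.ker f := (bK a).2
    have : v (Sum.inl a) = (bK a : (Fin n → D)) := by
      simp [v, Basis.prod_apply, Submodule.coe_prodEquivOfIsCompl']
    rw [this]
    exact LinearMap.mem_ker.mp hmem
  have hvinr : ∀ b : Fin r, f (v (Sum.inr b)) = w (Sum.inr b) := by
    intro b
    have h1 : v (Sum.inr b) = (bC b : (Fin n → D)) := by
      simp [v, Basis.prod_apply, Submodule.coe_prodEquivOfIsCompl']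
    have h2 : w (Sum.inr b) = (bR b : (Fin n → D)) := by
      simp [w, Basis.prod_apply, Submodule.coe_prodEquivOfIsCompl']
    have h3 : ((bR b : LinearMap.range f) : (Fin n → D)) = f (bC b : (Fin n → D)) := by
      simp only [bR, Basis.map_apply, eφ, LinearEquiv.trans_apply]
      rw [LinearEquiv.coe_ofEq_apply, LinearEquiv.ofInjective_apply]
      simp [φ]
    rw [h1, h2, h3]
  have hk1 : 1 ≤ k := by
    by_contra h
    apply hf
    rw [← LinearMap.ker_eq_bot, ← Submodule.finrank_eq_zero (R := D)]
    omega
  let E : (Fin k ⊕ Fin r) ≃ Fin n := finSumFinEquiv.trans (finCongr hkr)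
  let π : (Fin k ⊕ Fin r) ≃ (Fin k ⊕ Fin r) :=
    E.trans ((Equiv.addRight (1 : Fin n)).trans E.symm)
  let u := v.equiv w π
  have main : ∀ ε : D, ε ≠ 0 → ∀ x : Fin n → D,
      f x + ε • u x = 0 → x = 0 := by
    intro ε hε x hx0
    set c := v.repr x with hcdef
    have hrepr : ∑ i, c i • v i = x := v.sum_repr x
    have hfx : f x = ∑ j : Fin k ⊕ Fin r,
        (Sum.elim (fun _ => (0:D)) (fun b => c (Sum.inr b)) j) • w j := by
      conv_lhs => rw [← hrepr]
      rw [map_sum, Fintype.sum_sum_type, Fintype.sum_sum_type]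
      simp only [_root_.map_smul, hvinl, hvinr, smul_zero, Finset.sum_const_zero, Sum.elim_inl,
        Sum.elim_inr, zero_smul, zero_add]
    have hux : ε • u x = ∑ j : Fin k ⊕ Fin r, (ε * c (π.symm j)) • w j := by
      have h1 : u x = ∑ i, c i • w (π i) := by
        conv_lhs => rw [← hrepr]
        rw [map_sum]
        simp only [_root_.map_smul, Basis.equiv_apply, u]
      rw [h1, Finset.smul_sum]
      rw [← Equiv.sum_comp π (fun j => (ε * c (π.symm j)) • w j)]
      simp only [Equiv.symm_apply_apply, smul_smul]
    have hsum : ∑ j : Fin k ⊕ Fin r,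
        ((Sum.elim (fun _ => (0:D)) (fun b => c (Sum.inr b)) j) + ε * c (π.symm j)) • w j = 0 := by
      simp only [add_smul, Finset.sum_add_distrib]
      rw [← hfx, ← hux, hx0]
    have hcoef : ∀ j, (Sum.elim (fun _ => (0:D)) (fun b => c (Sum.inr b)) j)
        + ε * c (π.symm j) = 0 := by
      have li := w.linearIndependent
      rw [Fintype.linearIndependent_iff] at li
      exact li _ hsum
    set c' : Fin n → D := fun m => c (E.symm m) with hc'def
    have hπsymm : ∀ m : Fin n, π.symm (E.symm m) = E.symm (m - 1) := by
      intro m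
      rw [Equiv.symm_apply_eq]
      simp only [π, Equiv.trans_apply, Equiv.coe_addRight, Equiv.apply_symm_apply,
        sub_add_cancel]
    have hstep : ∀ m : Fin n, c' m = 0 → c' (m - 1) = 0 := by
      intro m hm
      have h0 := hcoef (E.symm m)
      rw [hπsymm] at h0
      have hg : Sum.elim (fun _ => (0:D)) (fun b => c (Sum.inr b)) (E.symm m) = 0 := by
        rcases h : E.symm m with a | b
        · simp
        · have : c' m = c (Sum.inr b) := by rw [hc'def]; simp [h]
          simp [← this, hm]
      rw [hg, zero_add] at h0
      exact (mul_eq_zero.mp h0).resolve_left hε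
    have hbase : c' ((0:Fin n) - 1) = 0 := by
      have h0 := hcoef (E.symm 0)
      rw [hπsymm] at h0
      have hg : Sum.elim (fun _ => (0:D)) (fun b => c (Sum.inr b)) (E.symm (0 : Fin n)) = 0 := by
        have hE0 : E.symm (0 : Fin n) = Sum.inl (⟨0, hk1⟩ : Fin k) := by
          rw [Equiv.symm_apply_eq]
          simp [E, Fin.ext_iff]
        rw [hE0]
        simp
      rw [hg, zero_add] at h0
      exact (mul_eq_zero.mp h0).resolve_left hε
    have hchain : ∀ t : ℕ, c' ((0:Fin n) - ((t+1 : ℕ) : Fin n)) = 0 := by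
      intro t
      induction t with
      | zero => simpa using hbase
      | succ t ih =>
        have h5 := hstep _ ih
        rwa [show ((0:Fin n) - ((t+1 : ℕ) : Fin n)) - 1 = (0:Fin n) - ((t+1+1 : ℕ) : Fin n) by
          rw [sub_sub]; congr 1; push_cast; ring] at h5
    have hc'all : ∀ m : Fin n, c' m = 0 := by
      intro m
      have h3 : (0:Fin n) - ((n - m.val : ℕ) : Fin n) = m := by
        rw [Nat.cast_sub m.isLt.le, Fin.natCast_self, Fin.cast_val_eq_self, zero_sub, zero_sub,
          neg_neg]
      have h4 := hchain (n - m.val - 1)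
      rwa [show n - m.val - 1 + 1 = n - m.val from by omega, h3] at h4
    have hcall : ∀ j, c j = 0 := fun j => by
      have h6 := hc'all (E j)
      rw [hc'def] at h6
      simpa using h6
    have hxe : x = ∑ i : Fin k ⊕ Fin r, c i • v i := hrepr.symm
    rw [hxe]
    apply Finset.sum_eq_zero
    intro i _
    rw [hcall i, zero_smul]
  refine ⟨u, ?_, ?_⟩
  · rw [← LinearMap.ker_eq_bot, LinearMap.ker_eq_bot']
    intro x hx
    apply main 1 one_ne_zero x
    rw [LinearMap.add_apply] at hx
    rw [one_smul]
    exact hx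
  · rw [← LinearMap.ker_eq_bot, LinearMap.ker_eq_bot']
    intro x hx
    apply main (-1) (neg_ne_zero.mpr one_ne_zero) x
    rw [LinearMap.sub_apply] at hx
    rw [neg_smul, one_smul, ← sub_eq_add_neg]
    exact hx

end TwinGoodAux

/-- If `D` is a division ring, then `Mₙ(D)` is twin-good for every `n ≥ 2`. -/
theorem matrix_twinGood_of_divisionRing (D : Type*) [DivisionRing D]
    (n : ℕ) (hn : 2 ≤ n) :
    ∀ A : Matrix (Fin n) (Fin n) D, ∃ U : Matrix (Fin n) (Fin n) D,
      IsUnit U ∧ IsUnit (A + U) ∧ IsUnit (A - U) := by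
  haveI : NeZero n := ⟨by omega⟩
  intro A
  by_cases hA : IsUnit A
  · -- invertible case: use the companion matrix of `Xⁿ - X - 1`
    have hG : ∀ a : D, a = 0 ∨ a = 1 ∨ a = -1 →
        IsUnit (a • (1 : Matrix (Fin n) (Fin n) D) + Gm n D) := by
      intro a ha
      rw [isUnit_iff_inj, ← LinearMap.ker_eq_bot, LinearMap.ker_eq_bot']
      intro x hx
      exact key_inj hn a ha x hx
    have hG0 : IsUnit (Gm n D) := by
      have h := hG 0 (Or.inl rfl)
      rwa [zero_smul, zero_add] at h
    have hG1 : IsUnit (1 + Gm n D) := by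
      have h := hG 1 (Or.inr (Or.inl rfl))
      rwa [one_smul] at h
    have hGm1 : IsUnit (1 - Gm n D) := by
      have h := hG (-1) (Or.inr (Or.inr rfl))
      rw [neg_smul, one_smul, neg_add_eq_sub] at h
      have h2 := h.neg
      rwa [neg_sub] at h2
    refine ⟨A * Gm n D, hA.mul hG0, ?_, ?_⟩
    · have he : A + A * Gm n D = A * (1 + Gm n D) := by rw [mul_add, mul_one]
      rw [he]
      exact hA.mul hG1
    · have he : A - A * Gm n D = A * (1 - Gm n D) := by rw [mul_sub, mul_one]
      rw [he]
      exact hA.mul hGm1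
  · -- non-invertible case
    have hf : ¬ Injective A.vecMulLinear := fun h => hA ((isUnit_iff_inj A).mpr h)
    obtain ⟨u, hu1, hu2⟩ := noninv_case (by omega) A.vecMulLinear hf
    have hU : (toMat u.toLinearMap).vecMulLinear = u.toLinearMap :=
      LinearMap.ext fun x => vecMul_toMat _ x
    refine ⟨toMat u.toLinearMap, ?_, ?_, ?_⟩
    · rw [isUnit_iff_inj, hU]
      exact u.injective
    · rw [isUnit_iff_inj]
      have he : (A + toMat u.toLinearMap).vecMulLinear = A.vecMulLinear + u.toLinearMap := by
        refine LinearMap.ext fun x => ?_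
        simp only [Matrix.vecMulLinear_apply, LinearMap.add_apply, Matrix.vecMul_add,
          vecMul_toMat]
      rw [he]
      exact hu1
    · rw [isUnit_iff_inj]
      have he : (A - toMat u.toLinearMap).vecMulLinear = A.vecMulLinear - u.toLinearMap := by
        refine LinearMap.ext fun x => ?_
        simp only [Matrix.vecMulLinear_apply, LinearMap.sub_apply, Matrix.vecMul_sub,
          vecMul_toMat]
      rw [he]
      exact hu2
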